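/- Let M₁ ≤ M₂ be real numbers, let f : ℝ → [M₁, M₂] be nondecreasing, and let X and Y be real-valued random variables with cumulative distribution functions F_X and F_Y. Then for every δ ≥ 0: E[f(X)] ≥ E[f(Y − δ)] − (M₂ − M₁)·L_δ(F_X, F_Y) and E[f(X)] ≤ E[f(Y + δ)] + (M₂ − M₁)·L_δ(F_X, F_Y). If in addition f is Lipschitz continuous with constant C, then |E[f(X)] − E[f(Y)]| ≤ C·δ + (M₂ − M₁)·L_δ(F_X, F_Y). -/

import Mathlib

open Filter MeasureTheory Set

/-- A cumulative distribution function on ℝ: nondecreasing, right-continuous,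
with limit 0 at -∞ and 1 at +∞. -/
def IsCDF (F : ℝ → ℝ) : Prop :=
  Monotone F ∧ (∀ t : ℝ, ContinuousWithinAt F (Set.Ici t) t) ∧
    Tendsto F atBot (nhds 0) ∧ Tendsto F atTop (nhds 1)

/-- The Lévy gauge with tolerance `δ` between two cdfs. -/
noncomputable def levyGauge (δ : ℝ) (F G : ℝ → ℝ) : ℝ :=
  sInf {ε : ℝ | 0 ≤ ε ∧ ∀ t : ℝ, F (t - δ) - ε ≤ G t ∧ G t ≤ F (t + δ) + ε}

/-- The cumulative distribution function of a real random variable `X` under `P`. -/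
noncomputable def rvCdf {Ω : Type*} [MeasurableSpace Ω] (P : MeasureTheory.Measure Ω)
    (X : Ω → ℝ) (t : ℝ) : ℝ :=
  (P {ω | X ω ≤ t}).toReal

/-- The Lévy gauge of two functions with values in `[0,1]` satisfies its defining property. -/
lemma levyGauge_spec {F G : ℝ → ℝ} (δ : ℝ)
    (hF0 : ∀ t, 0 ≤ F t) (hF1 : ∀ t, F t ≤ 1) (hG0 : ∀ t, 0 ≤ G t) (hG1 : ∀ t, G t ≤ 1) :
    0 ≤ levyGauge δ F G ∧
      ∀ t : ℝ, F (t - δ) - levyGauge δ F G ≤ G t ∧ G t ≤ F (t + δ) + levyGauge δ F G := by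
  have h : levyGauge δ F G ∈
      {ε : ℝ | 0 ≤ ε ∧ ∀ t : ℝ, F (t - δ) - ε ≤ G t ∧ G t ≤ F (t + δ) + ε} := by
    apply IsClosed.csInf_mem
    · have hset : {ε : ℝ | 0 ≤ ε ∧ ∀ t : ℝ, F (t - δ) - ε ≤ G t ∧ G t ≤ F (t + δ) + ε}
          = Ici 0 ∩ ⋂ t : ℝ, (Ici (F (t - δ) - G t) ∩ Ici (G t - F (t + δ))) := by
        ext ε
        simp only [mem_setOf_eq, mem_inter_iff, mem_Ici, mem_iInter]
        constructor
        · rintro ⟨h0, h⟩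
          exact ⟨h0, fun t => ⟨by linarith [(h t).1], by linarith [(h t).2]⟩⟩
        · rintro ⟨h0, h⟩
          exact ⟨h0, fun t => ⟨by linarith [(h t).1], by linarith [(h t).2]⟩⟩
      rw [hset]
      exact isClosed_Ici.inter (isClosed_iInter fun t => isClosed_Ici.inter isClosed_Ici)
    · exact ⟨1, zero_le_one, fun t =>
        ⟨by linarith [hF1 (t - δ), hG0 t], by linarith [hG1 t, hF0 (t + δ)]⟩⟩
    · exact ⟨0, fun x hx => hx.1⟩
  exact ⟨h.1, h.2⟩

/-- `(μ sᶜ).toReal = 1 - (μ s).toReal` for a probability measure. -/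
lemma prob_compl_toReal {Ω : Type*} [MeasurableSpace Ω] (μ : Measure Ω)
    [IsProbabilityMeasure μ] {s : Set Ω} (hs : MeasurableSet s) :
    (μ sᶜ).toReal = 1 - (μ s).toReal := by
  rw [measure_compl hs (measure_ne_top μ s), measure_univ,
    ENNReal.toReal_sub_of_le prob_le_one ENNReal.one_ne_top, ENNReal.toReal_one]

/-- Core comparison: if the cdf of `V` is dominated by the `δ`-shifted cdf of `U` up to `ε`,
then for any upper set `A`, `μ (U ∈ A) ≤ ν (V + δ ∈ A) + ε`. -/
lemma core_upper {Ω₁ Ω₂ : Type*} [MeasurableSpace Ω₁] [MeasurableSpace Ω₂]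
    (μ : Measure Ω₁) (ν : Measure Ω₂) [IsProbabilityMeasure μ] [IsProbabilityMeasure ν]
    (U : Ω₁ → ℝ) (V : Ω₂ → ℝ) (hU : Measurable U) (hV : Measurable V)
    (δ ε : ℝ) (hε : 0 ≤ ε)
    (hyp : ∀ t : ℝ, (ν {ω | V ω ≤ t}).toReal ≤ (μ {ω | U ω ≤ t + δ}).toReal + ε)
    (A : Set ℝ) (hA : ∀ ⦃x y : ℝ⦄, x ∈ A → x ≤ y → y ∈ A) :
    (μ {ω | U ω ∈ A}).toReal ≤ (ν {ω | V ω + δ ∈ A}).toReal + ε := by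
  rcases A.eq_empty_or_nonempty with hAe | hne
  · have : {ω | U ω ∈ A} = (∅ : Set Ω₁) := by simp [hAe]
    rw [this]
    simp only [measure_empty, ENNReal.toReal_zero]
    positivity
  by_cases huniv : A = univ
  · have h1 : {ω | V ω + δ ∈ A} = (univ : Set Ω₂) := by simp [huniv]
    rw [h1, measure_univ, ENNReal.toReal_one]
    have : (μ {ω | U ω ∈ A}).toReal ≤ 1 := by
      have := ENNReal.toReal_mono ENNReal.one_ne_top
        (prob_le_one (μ := μ) (s := {ω | U ω ∈ A}))
      simpa using this
    linarith
  have hcne : Aᶜ.Nonempty := Set.nonempty_compl.2 huniv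
  obtain ⟨b, hb⟩ := hcne
  have hbdd : BddBelow A := by
    refine ⟨b, fun x hx => ?_⟩
    by_contra hxb
    exact hb (hA hx (le_of_not_ge hxb))
  set a := sInf A with ha_def
  have hIoi : Ioi a ⊆ A := by
    intro x hx
    obtain ⟨y, hy, hyx⟩ := exists_lt_of_csInf_lt hne hx
    exact hA hy hyx.le
  have hIci : A ⊆ Ici a := fun x hx => csInf_le hbdd hx
  by_cases haA : a ∈ A
  · -- A = Ici a
    have hAeq : A = Ici a := subset_antisymm hIci (fun x hx => hA haA hx)
    have e1 : {ω | U ω ∈ A} = {ω | U ω < a}ᶜ := by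
      ext ω; simp [hAeq, not_lt]
    have e2 : {ω | V ω + δ ∈ A} = {ω | V ω < a - δ}ᶜ := by
      ext ω
      simp only [hAeq, mem_setOf_eq, mem_Ici, mem_compl_iff, not_lt]
      constructor <;> intro <;> linarith
    -- key claim : ν {V < a - δ} ≤ μ {U < a} + ε (in toReal)
    have claim : (ν {ω | V ω < a - δ}).toReal ≤ (μ {ω | U ω < a}).toReal + ε := by
      have hsets : {ω | V ω < a - δ} = ⋃ n : ℕ, {ω | V ω ≤ a - δ - 1 / (n + 1)} := by
        ext ω
        simp only [mem_setOf_eq, mem_iUnion]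
        constructor
        · intro h
          obtain ⟨n, hn⟩ := exists_nat_one_div_lt (show (0:ℝ) < (a - δ) - V ω by linarith)
          exact ⟨n, by linarith⟩
        · rintro ⟨n, hn⟩
          have : (0:ℝ) < 1 / (n + 1) := by positivity
          linarith
      have hmono : Monotone (fun n : ℕ => {ω | V ω ≤ a - δ - 1 / (n + 1)}) := by
        intro n m hnm ω hω
        have h1 : (1:ℝ) / (m + 1) ≤ 1 / (n + 1) := by
          apply one_div_le_one_div_of_le
          · positivity
          · have : (n:ℝ) ≤ m := Nat.cast_le.2 hnm
            linarith
        simp only [mem_setOf_eq] at *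
        linarith
      have hle : ν {ω | V ω < a - δ} ≤ ENNReal.ofReal ((μ {ω | U ω < a}).toReal + ε) := by
        rw [hsets, hmono.directed_le.measure_iUnion]
        apply iSup_le
        intro n
        have hpos : (0:ℝ) < 1 / ((n:ℝ) + 1) := by positivity
        have h1 := hyp (a - δ - 1 / (n + 1))
        have h2 : μ {ω | U ω ≤ a - δ - 1 / (↑n + 1) + δ} ≤ μ {ω | U ω < a} := by
          apply measure_mono
          intro ω hω
          simp only [mem_setOf_eq] at *
          linarith
        have h2' := ENNReal.toReal_mono (measure_ne_top μ _) h2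
        calc ν {ω | V ω ≤ a - δ - 1 / (↑n + 1)}
            = ENNReal.ofReal (ν {ω | V ω ≤ a - δ - 1 / (↑n + 1)}).toReal := by
              rw [ENNReal.ofReal_toReal (measure_ne_top ν _)]
          _ ≤ ENNReal.ofReal ((μ {ω | U ω < a}).toReal + ε) := by
              apply ENNReal.ofReal_le_ofReal
              linarith
      exact ENNReal.toReal_le_of_le_ofReal
        (by positivity) hle
    have c1 : (μ {ω | U ω < a}ᶜ).toReal = 1 - (μ {ω | U ω < a}).toReal :=
      prob_compl_toReal μ (measurableSet_lt hU measurable_const)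
    have c2 : (ν {ω | V ω < a - δ}ᶜ).toReal = 1 - (ν {ω | V ω < a - δ}).toReal :=
      prob_compl_toReal ν (measurableSet_lt hV measurable_const)
    rw [e1, e2, c1, c2]
    linarith
  · -- A = Ioi a
    have hAeq : A = Ioi a := by
      apply subset_antisymm _ hIoi
      intro x hx
      rcases lt_or_eq_of_le (mem_Ici.mp (hIci hx)) with h | h
      · exact h
      · exact absurd (h ▸ hx) haA
    have e1 : {ω | U ω ∈ A} = {ω | U ω ≤ a}ᶜ := by
      ext ω; simp [hAeq, not_le]
    have e2 : {ω | V ω + δ ∈ A} = {ω | V ω ≤ a - δ}ᶜ := by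
      ext ω
      simp only [hAeq, mem_setOf_eq, mem_Ioi, mem_compl_iff, not_le]
      constructor <;> intro <;> linarith
    have h1 := hyp (a - δ)
    rw [show a - δ + δ = a by ring] at h1
    have c1 : (μ {ω | U ω ≤ a}ᶜ).toReal = 1 - (μ {ω | U ω ≤ a}).toReal :=
      prob_compl_toReal μ (measurableSet_le hU measurable_const)
    have c2 : (ν {ω | V ω ≤ a - δ}ᶜ).toReal = 1 - (ν {ω | V ω ≤ a - δ}).toReal :=
      prob_compl_toReal ν (measurableSet_le hV measurable_const)
    rw [e1, e2, c1, c2]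
    linarith

/-- Integral comparison via tail probabilities: if the tail probabilities of `g'` are dominated
by those of `g` up to `ε`, and both take values in `[0, B]`, then `∫ g' ≤ ∫ g + B * ε`. -/
lemma integral_le_of_tail_le {Ω₁ Ω₂ : Type*} [MeasurableSpace Ω₁] [MeasurableSpace Ω₂]
    (μ : Measure Ω₁) (ν : Measure Ω₂) [IsProbabilityMeasure μ] [IsProbabilityMeasure ν]
    (g : Ω₁ → ℝ) (g' : Ω₂ → ℝ) (hg : Measurable g) (hg' : Measurable g')
    (B ε : ℝ) (hB : 0 ≤ B) (hε : 0 ≤ ε)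
    (hgb : ∀ ω, g ω ∈ Icc 0 B) (hg'b : ∀ ω, g' ω ∈ Icc 0 B)
    (hcomp : ∀ t : ℝ, 0 < t → (ν {ω | t < g' ω}).toReal ≤ (μ {ω | t < g ω}).toReal + ε) :
    ∫ ω, g' ω ∂ν ≤ (∫ ω, g ω ∂μ) + B * ε := by
  have hgi : Integrable g μ := by
    refine Integrable.mono' (integrable_const B) hg.aestronglyMeasurable (ae_of_all _ fun ω => ?_)
    rw [Real.norm_eq_abs, abs_of_nonneg (hgb ω).1]
    exact (hgb ω).2
  have hg'i : Integrable g' ν := by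
    refine Integrable.mono' (integrable_const B) hg'.aestronglyMeasurable (ae_of_all _ fun ω => ?_)
    rw [Real.norm_eq_abs, abs_of_nonneg (hg'b ω).1]
    exact (hg'b ω).2
  rw [hgi.integral_eq_integral_meas_lt (ae_of_all _ fun ω => (hgb ω).1),
    hg'i.integral_eq_integral_meas_lt (ae_of_all _ fun ω => (hg'b ω).1)]
  set h₁ : ℝ → ℝ := fun t => (μ {ω | t < g ω}).toReal with hh₁
  set h₂ : ℝ → ℝ := fun t => (ν {ω | t < g' ω}).toReal with hh₂
  have hanti₁ : Antitone h₁ := by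
    intro s t hst
    exact ENNReal.toReal_mono (measure_ne_top μ _)
      (measure_mono (fun ω hω => lt_of_le_of_lt hst hω))
  have hanti₂ : Antitone h₂ := by
    intro s t hst
    exact ENNReal.toReal_mono (measure_ne_top ν _)
      (measure_mono (fun ω hω => lt_of_le_of_lt hst hω))
  set φ : ℝ → ℝ := (Ioc (0:ℝ) B).indicator (fun _ => (1:ℝ)) with hφ
  have hφi : Integrable φ (volume.restrict (Ioi (0:ℝ))) := by
    apply IntegrableOn.integrable_indicator _ measurableSet_Ioc
    refine integrableOn_const (ne_of_lt ?_)
    calc (volume.restrict (Ioi (0:ℝ))) (Ioc 0 B)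
        ≤ volume (Ioc (0:ℝ) B) := Measure.restrict_apply_le _ _
      _ < ⊤ := measure_Ioc_lt_top
  -- vanishing of h₁, h₂ above B
  have hvan₁ : ∀ t : ℝ, B < t → h₁ t = 0 := by
    intro t ht
    have he : {ω | t < g ω} = (∅ : Set Ω₁) := by
      ext ω
      simp only [mem_setOf_eq, mem_empty_iff_false, iff_false, not_lt]
      linarith [(hgb ω).2]
    simp only [hh₁, he, measure_empty, ENNReal.toReal_zero]
  have hvan₂ : ∀ t : ℝ, B < t → h₂ t = 0 := by
    intro t ht
    have he : {ω | t < g' ω} = (∅ : Set Ω₂) := by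
      ext ω
      simp only [mem_setOf_eq, mem_empty_iff_false, iff_false, not_lt]
      linarith [(hg'b ω).2]
    simp only [hh₂, he, measure_empty, ENNReal.toReal_zero]
  -- h₁ is integrable on Ioi 0
  have hh₁m : Measurable h₁ := hanti₁.measurable
  have hh₁i : Integrable h₁ (volume.restrict (Ioi (0:ℝ))) := by
    refine Integrable.mono' hφi (hh₁m.aestronglyMeasurable) ?_
    filter_upwards [ae_restrict_mem measurableSet_Ioi] with t ht
    by_cases htB : t ≤ B
    · have hφ1 : φ t = 1 := by
        rw [hφ, indicator_of_mem (mem_Ioc.mpr ⟨mem_Ioi.mp ht, htB⟩)]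
      rw [hφ1, Real.norm_eq_abs, abs_of_nonneg ENNReal.toReal_nonneg]
      have := ENNReal.toReal_mono ENNReal.one_ne_top (prob_le_one (μ := μ) (s := {ω | t < g ω}))
      simpa [hh₁] using this
    · have hz : h₁ t = 0 := hvan₁ t (lt_of_not_ge htB)
      have hφ0 : φ t = 0 := by
        rw [hφ, indicator_of_notMem (fun h => htB h.2)]
      rw [hz, hφ0]; simp
  -- pointwise comparison on Ioi 0
  have hptwise : ∀ t ∈ Ioi (0:ℝ), h₂ t ≤ h₁ t + ε * φ t := by
    intro t ht
    by_cases htB : t ≤ B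
    · have hφ1 : φ t = 1 := by rw [hφ, indicator_of_mem (mem_Ioc.mpr ⟨mem_Ioi.mp ht, htB⟩)]
      rw [hφ1, mul_one]
      exact hcomp t (mem_Ioi.mp ht)
    · have hz₂ : h₂ t = 0 := hvan₂ t (lt_of_not_ge htB)
      have hφ0 : φ t = 0 := by rw [hφ, indicator_of_notMem (fun h => htB h.2)]
      rw [hz₂, hφ0, mul_zero, add_zero]
      exact ENNReal.toReal_nonneg
  have key : ∫ t in Ioi (0:ℝ), h₂ t ≤ ∫ t in Ioi (0:ℝ), (h₁ t + ε * φ t) := by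
    apply integral_mono_of_nonneg
    · exact ae_of_all _ fun t => ENNReal.toReal_nonneg
    · exact hh₁i.add (hφi.const_mul ε)
    · filter_upwards [ae_restrict_mem measurableSet_Ioi] with t ht
      exact hptwise t ht
  have hsplit : ∫ t in Ioi (0:ℝ), (h₁ t + ε * φ t)
      = (∫ t in Ioi (0:ℝ), h₁ t) + ε * ∫ t in Ioi (0:ℝ), φ t := by
    rw [integral_add hh₁i (hφi.const_mul ε), integral_const_mul]
  have hφint : ∫ t in Ioi (0:ℝ), φ t = B := by
    rw [hφ, integral_indicator measurableSet_Ioc,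
      Measure.restrict_restrict measurableSet_Ioc]
    have : Ioc (0:ℝ) B ∩ Ioi 0 = Ioc 0 B := by
      apply inter_eq_self_of_subset_left
      exact Ioc_subset_Ioi_self
    rw [this]
    simp [Real.volume_Ioc, hB]
  calc ∫ t in Ioi (0:ℝ), h₂ t ≤ ∫ t in Ioi (0:ℝ), (h₁ t + ε * φ t) := key
    _ = (∫ t in Ioi (0:ℝ), h₁ t) + ε * B := by rw [hsplit, hφint]
    _ = (∫ t in Ioi (0:ℝ), h₁ t) + B * ε := by ring

lemma toReal_prob_le_one {Ω : Type*} [MeasurableSpace Ω] (P : MeasureTheory.Measure Ω)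
    [IsProbabilityMeasure P] (s : Set Ω) : (P s).toReal ≤ 1 := by
  have := ENNReal.toReal_mono ENNReal.one_ne_top (prob_le_one (μ := P) (s := s))
  simpa using this

lemma integrable_comp_bdd {Ω : Type*} [MeasurableSpace Ω] (P : MeasureTheory.Measure Ω)
    [IsProbabilityMeasure P] {f : ℝ → ℝ} {M₁ M₂ : ℝ} (hfm : Measurable f)
    (hrange : ∀ x : ℝ, f x ∈ Set.Icc M₁ M₂) (Z : Ω → ℝ) (hZ : Measurable Z) :
    Integrable (fun ω => f (Z ω)) P := by
  refine Integrable.mono' (integrable_const (max |M₁| |M₂|))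
    ((hfm.comp hZ).aestronglyMeasurable) (ae_of_all _ fun ω => ?_)
  rw [Real.norm_eq_abs, abs_le]
  constructor
  · have h1 := (hrange (Z ω)).1
    have h2 := neg_abs_le M₁
    have h3 := le_max_left |M₁| |M₂|
    linarith
  · have h1 := (hrange (Z ω)).2
    have h2 := le_abs_self M₂
    have h3 := le_max_right |M₁| |M₂|
    linarith

lemma integral_shift_const {Ω : Type*} [MeasurableSpace Ω] (P : MeasureTheory.Measure Ω)
    [IsProbabilityMeasure P] {f : ℝ → ℝ} {M₁ M₂ : ℝ} (hfm : Measurable f)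
    (hrange : ∀ x : ℝ, f x ∈ Set.Icc M₁ M₂) (Z : Ω → ℝ) (hZ : Measurable Z) :
    ∫ ω, (f (Z ω) - M₁) ∂P = (∫ ω, f (Z ω) ∂P) - M₁ := by
  rw [integral_sub (integrable_comp_bdd P hfm hrange Z hZ) (integrable_const M₁), integral_const]
  simp

lemma lip_integral_shift {Ω : Type*} [MeasurableSpace Ω] (P : MeasureTheory.Measure Ω)
    [IsProbabilityMeasure P] {f : ℝ → ℝ} {M₁ M₂ : ℝ} (hfm : Measurable f)
    (hrange : ∀ x : ℝ, f x ∈ Set.Icc M₁ M₂) {C : NNReal} (hLip : LipschitzWith C f)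
    (Z : Ω → ℝ) (hZ : Measurable Z) {δ : ℝ} (hδ : 0 ≤ δ) (c : ℝ) (hc : |c| ≤ δ) :
    |(∫ ω, f (Z ω + c) ∂P) - ∫ ω, f (Z ω) ∂P| ≤ (C : ℝ) * δ := by
  rw [← integral_sub (integrable_comp_bdd P hfm hrange _ (hZ.add_const c))
    (integrable_comp_bdd P hfm hrange Z hZ)]
  calc |∫ ω, (f (Z ω + c) - f (Z ω)) ∂P|
      ≤ ∫ ω, |f (Z ω + c) - f (Z ω)| ∂P := by
        simpa [Real.norm_eq_abs] using
          norm_integral_le_integral_norm (μ := P) (fun ω => f (Z ω + c) - f (Z ω))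
    _ ≤ ∫ _ω, (C : ℝ) * δ ∂P := by
        apply integral_mono_of_nonneg (ae_of_all _ fun ω => abs_nonneg _)
          (integrable_const _) (ae_of_all _ fun ω => ?_)
        have h := hLip.dist_le_mul (Z ω + c) (Z ω)
        rw [Real.dist_eq, Real.dist_eq, show Z ω + c - Z ω = c by ring] at h
        have hCc : (C : ℝ) * |c| ≤ (C : ℝ) * δ :=
          mul_le_mul_of_nonneg_left hc C.coe_nonneg
        exact le_trans h hCc
    _ = (C : ℝ) * δ := by simp

/-- Expectation bounds via the Lévy gauge for a nondecreasing function `f : ℝ → [M₁, M₂]`,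
together with the Lipschitz refinement. -/
theorem expectation_bounds_levyGauge {Ω₁ Ω₂ : Type*} [MeasurableSpace Ω₁] [MeasurableSpace Ω₂]
    (P₁ : Measure Ω₁) (P₂ : Measure Ω₂)
    [IsProbabilityMeasure P₁] [IsProbabilityMeasure P₂]
    (X : Ω₁ → ℝ) (Y : Ω₂ → ℝ) (hX : Measurable X) (hY : Measurable Y)
    (M₁ M₂ : ℝ) (hM : M₁ ≤ M₂)
    (f : ℝ → ℝ) (hf : Monotone f) (hrange : ∀ x : ℝ, f x ∈ Set.Icc M₁ M₂)
    (δ : ℝ) (hδ : 0 ≤ δ) :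
    ((∫ ω, f (Y ω - δ) ∂P₂) - (M₂ - M₁) * levyGauge δ (rvCdf P₁ X) (rvCdf P₂ Y) ≤
        ∫ ω, f (X ω) ∂P₁) ∧
    ((∫ ω, f (X ω) ∂P₁) ≤
        (∫ ω, f (Y ω + δ) ∂P₂) + (M₂ - M₁) * levyGauge δ (rvCdf P₁ X) (rvCdf P₂ Y)) ∧
    (∀ C : NNReal, LipschitzWith C f →
      |(∫ ω, f (X ω) ∂P₁) - ∫ ω, f (Y ω) ∂P₂| ≤
        (C : ℝ) * δ + (M₂ - M₁) * levyGauge δ (rvCdf P₁ X) (rvCdf P₂ Y)) := by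
  obtain ⟨hε0, hspec⟩ := levyGauge_spec (F := rvCdf P₁ X) (G := rvCdf P₂ Y) δ
    (fun t => ENNReal.toReal_nonneg) (fun t => toReal_prob_le_one _ _)
    (fun t => ENNReal.toReal_nonneg) (fun t => toReal_prob_le_one _ _)
  set ε := levyGauge δ (rvCdf P₁ X) (rvCdf P₂ Y) with hεdef
  set B := M₂ - M₁ with hBdef
  have hB : 0 ≤ B := by rw [hBdef]; linarith
  have hfm : Measurable f := hf.measurable
  -- upper level sets of f are upper sets
  have hupper : ∀ s : ℝ, ∀ ⦃x y : ℝ⦄, x ∈ {x : ℝ | s < f x} → x ≤ y → y ∈ {x : ℝ | s < f x} :=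
    fun s x y hx hxy => lt_of_lt_of_le hx (hf hxy)
  -- bounds for shifted functions
  have hbound : ∀ (x : ℝ), f x - M₁ ∈ Icc 0 B := by
    intro x
    constructor
    · linarith [(hrange x).1]
    · rw [hBdef]; linarith [(hrange x).2]
  -- Part 2
  have part2 : (∫ ω, f (X ω) ∂P₁) ≤ (∫ ω, f (Y ω + δ) ∂P₂) + B * ε := by
    have hyp₂ : ∀ s : ℝ, (P₂ {ω | Y ω ≤ s}).toReal ≤ (P₁ {ω | X ω ≤ s + δ}).toReal + ε :=
      fun s => (hspec s).2
    have key := integral_le_of_tail_le P₂ P₁ (fun ω => f (Y ω + δ) - M₁) (fun ω => f (X ω) - M₁)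
      ((hfm.comp (hY.add_const δ)).sub measurable_const)
      ((hfm.comp hX).sub measurable_const)
      B ε hB hε0 (fun ω => hbound _) (fun ω => hbound _) ?_
    · rw [integral_shift_const P₂ hfm hrange _ (hY.add_const δ), integral_shift_const P₁ hfm hrange X hX] at key
      linarith
    · intro t ht
      have core := core_upper P₁ P₂ X Y hX hY δ ε hε0 hyp₂ {x : ℝ | M₁ + t < f x} (hupper (M₁ + t))
      have e1 : {ω | t < f (X ω) - M₁} = {ω | X ω ∈ {x : ℝ | M₁ + t < f x}} := by
        ext ω; simp only [mem_setOf_eq]; constructor <;> intro <;> linarith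
      have e2 : {ω | t < f (Y ω + δ) - M₁} = {ω | Y ω + δ ∈ {x : ℝ | M₁ + t < f x}} := by
        ext ω; simp only [mem_setOf_eq]; constructor <;> intro <;> linarith
      rw [e1, e2]
      exact core
  -- Part 1
  have part1 : (∫ ω, f (Y ω - δ) ∂P₂) - B * ε ≤ ∫ ω, f (X ω) ∂P₁ := by
    have hyp₁ : ∀ s : ℝ, (P₁ {ω | X ω - δ ≤ s}).toReal ≤ (P₂ {ω | Y ω - δ ≤ s + δ}).toReal + ε := by
      intro s
      have h := (hspec (s + δ + δ)).1
      rw [show s + δ + δ - δ = s + δ by ring] at h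
      have e1 : {ω | X ω - δ ≤ s} = {ω | X ω ≤ s + δ} := by
        ext ω; simp only [mem_setOf_eq]; constructor <;> intro <;> linarith
      have e2 : {ω | Y ω - δ ≤ s + δ} = {ω | Y ω ≤ s + δ + δ} := by
        ext ω; simp only [mem_setOf_eq]; constructor <;> intro <;> linarith
      rw [e1, e2]
      simp only [rvCdf] at h
      linarith
    have key := integral_le_of_tail_le P₁ P₂ (fun ω => f (X ω) - M₁) (fun ω => f (Y ω - δ) - M₁)
      ((hfm.comp hX).sub measurable_const)
      ((hfm.comp (hY.sub_const δ)).sub measurable_const)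
      B ε hB hε0 (fun ω => hbound _) (fun ω => hbound _) ?_
    · rw [integral_shift_const P₁ hfm hrange X hX, integral_shift_const P₂ hfm hrange _ (hY.sub_const δ)] at key
      linarith
    · intro t ht
      have core := core_upper P₂ P₁ (fun ω => Y ω - δ) (fun ω => X ω - δ)
        (hY.sub_const δ) (hX.sub_const δ) δ ε hε0 hyp₁
        {x : ℝ | M₁ + t < f x} (hupper (M₁ + t))
      simp only [sub_add_cancel] at core
      have e1 : {ω | t < f (X ω) - M₁} = {ω | X ω ∈ {x : ℝ | M₁ + t < f x}} := by
        ext ω; simp only [mem_setOf_eq]; constructor <;> intro <;> linarith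
      have e2 : {ω | t < f (Y ω - δ) - M₁} = {ω | Y ω - δ ∈ {x : ℝ | M₁ + t < f x}} := by
        ext ω; simp only [mem_setOf_eq]; constructor <;> intro <;> linarith
      rw [e1, e2]
      exact core
  refine ⟨part1, part2, ?_⟩
  -- Part 3: Lipschitz refinement
  intro C hLip
  have hdist := fun (c : ℝ) (hc : |c| ≤ δ) =>
    lip_integral_shift P₂ hfm hrange hLip Y hY hδ c hc
  have habs : |δ| ≤ δ := by rw [abs_of_nonneg hδ]
  have hmabs : |(-δ)| ≤ δ := by rw [abs_neg, abs_of_nonneg hδ]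
  have h1 := hdist δ habs
  have h2 := hdist (-δ) hmabs
  simp only [← sub_eq_add_neg] at h2
  have h1' := abs_le.1 h1
  have h2' := abs_le.1 h2
  rw [abs_le]
  constructor
  · have := h2'.2
    linarith [part1]
  · have := h1'.1
    linarith [part2]
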